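/- Let u : ℝ² → ℝ be measurable, λ > 0, and suppose K := ∫_{ℝ²}(e^{λu²} − 1) dx < ∞. Then for all T > 0 and all t ∈ (0, T], λ (u*(t))² ≤ K/T + log(T/t). Consequently sup_{T>0} sup_{0<t≤T} u*(t)/√(4π/T + log(T/t)) ≤ (1/√λ) max{1, √(K/(4π))}. -/
import Mathlib


open MeasureTheory Real

/-- The decreasing rearrangement of a function on `ℝ²`. -/
noncomputable def decRearr (u : EuclideanSpace ℝ (Fin 2) → ℝ) (t : ℝ) : ℝ :=
  sInf {s : ℝ | 0 ≤ s ∧ volume {x : EuclideanSpace ℝ (Fin 2) | s < |u x|} ≤ ENNReal.ofReal t}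

lemma decRearr_nonneg (u : EuclideanSpace ℝ (Fin 2) → ℝ) (t : ℝ) : 0 ≤ decRearr u t :=
  Real.sInf_nonneg fun _ hx => hx.1

lemma decRearr_le {u : EuclideanSpace ℝ (Fin 2) → ℝ} {t s : ℝ} (hs : 0 ≤ s)
    (h : volume {x : EuclideanSpace ℝ (Fin 2) | s < |u x|} ≤ ENNReal.ofReal t) :
    decRearr u t ≤ s :=
  csInf_le ⟨0, fun _ hx => hx.1⟩ ⟨hs, h⟩

set_option maxHeartbeats 1000000 in
/-- If `K = ∫(e^{λu²} − 1) < ∞` then `λ(u*(t))² ≤ K/T + log(T/t)` for `0 < t ≤ T`,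
and consequently `u*(t)/√(4π/T + log(T/t)) ≤ (1/√λ)·max{1, √(K/4π)}`. -/
theorem zygmund_quasinorm_bound_of_exp_integral
    (u : EuclideanSpace ℝ (Fin 2) → ℝ) (hu : Measurable u)
    (lam : ℝ) (hlam : 0 < lam)
    (hint : Integrable (fun x => Real.exp (lam * (u x) ^ 2) - 1)
      (volume : Measure (EuclideanSpace ℝ (Fin 2))))
    (K : ℝ) (hK : K = ∫ x, (Real.exp (lam * (u x) ^ 2) - 1) ∂volume) :
    (∀ T : ℝ, 0 < T → ∀ t : ℝ, 0 < t → t ≤ T →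
      lam * (decRearr u t) ^ 2 ≤ K / T + Real.log (T / t)) ∧
    (∀ T : ℝ, 0 < T → ∀ t : ℝ, 0 < t → t ≤ T →
      decRearr u t / Real.sqrt (4 * π / T + Real.log (T / t)) ≤
        (1 / Real.sqrt lam) * max 1 (Real.sqrt (K / (4 * π)))) := by
  have hnn : ∀ x, 0 ≤ Real.exp (lam * (u x) ^ 2) - 1 := fun x => by
    have h0 : (0:ℝ) ≤ lam * (u x) ^ 2 := mul_nonneg hlam.le (sq_nonneg _)
    linarith [Real.one_le_exp h0]
  have hK0 : 0 ≤ K := hK ▸ integral_nonneg hnn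
  have hlin : (∫⁻ x, ENNReal.ofReal (Real.exp (lam * (u x) ^ 2) - 1) ∂volume)
      = ENNReal.ofReal K := by
    rw [hK, ofReal_integral_eq_lintegral_ofReal hint (ae_of_all _ hnn)]
  have key : ∀ T : ℝ, 0 < T → ∀ t : ℝ, 0 < t → t ≤ T →
      lam * (decRearr u t) ^ 2 ≤ K / T + Real.log (T / t) := by
    intro T hT t ht htT
    have hA : 0 ≤ Real.log (T / t) := Real.log_nonneg ((one_le_div ht).2 htT)
    have hKT : 0 ≤ K / T := div_nonneg hK0 hT.le
    refine le_of_forall_pos_le_add fun ε hε => ?_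
    set B := K / T + Real.log (T / t) + ε with hB
    have hB0 : 0 < B := by dsimp [B]; linarith
    set s := Real.sqrt (B / lam) with hsdef
    have hs0 : 0 ≤ s := Real.sqrt_nonneg _
    have hls : lam * s ^ 2 = B := by
      rw [hsdef, Real.sq_sqrt (by positivity)]
      field_simp
    set c := Real.exp B - 1 with hc
    have hc0 : 0 < c := by
      have := Real.add_one_lt_exp (ne_of_gt hB0)
      dsimp [c]; linarith
    have hKct : K ≤ c * t := by
      have h1 : Real.exp B = Real.exp (K / T + ε) * (T / t) := by
        rw [hB, show K / T + Real.log (T / t) + ε = (K / T + ε) + Real.log (T / t) by ring,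
          Real.exp_add, Real.exp_log (by positivity)]
      have h2 : 1 + (K / T + ε) ≤ Real.exp (K / T + ε) := by
        linarith [Real.add_one_le_exp (K / T + ε)]
      have h3 : (1 + K / T) * (T / t) ≤ Real.exp B := by
        rw [h1]
        apply mul_le_mul_of_nonneg_right _ (by positivity)
        linarith
      have h4 : (1 + K / T) * (T / t) = T / t + K / t := by
        field_simp
      have h5 : 1 ≤ T / t := (one_le_div ht).2 htT
      have h6 : K / t ≤ c := by dsimp [c]; rw [h4] at h3; linarith
      calc K = K / t * t := by field_simp
        _ ≤ c * t := mul_le_mul_of_nonneg_right h6 ht.le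
    have hmeas : Measurable (fun x => ENNReal.ofReal (Real.exp (lam * (u x) ^ 2) - 1)) :=
      ((((hu.pow_const 2).const_mul lam).exp).sub measurable_const).ennreal_ofReal
    have hsub : {x : EuclideanSpace ℝ (Fin 2) | s < |u x|} ⊆
        {x | ENNReal.ofReal c ≤ ENNReal.ofReal (Real.exp (lam * (u x) ^ 2) - 1)} := by
      intro x hx
      simp only [Set.mem_setOf_eq] at hx
      have h1 : s ^ 2 ≤ (u x) ^ 2 := by
        have := pow_le_pow_left₀ hs0 hx.le 2
        simpa [sq_abs] using this
      apply ENNReal.ofReal_le_ofReal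
      have h7 : lam * s ^ 2 ≤ lam * (u x) ^ 2 := mul_le_mul_of_nonneg_left h1 hlam.le
      have h8 := Real.exp_le_exp.2 h7
      rw [hls] at h8
      dsimp [c]; linarith
    have cheb := mul_meas_ge_le_lintegral₀ (μ := volume) hmeas.aemeasurable (ENNReal.ofReal c)
    have h2 : ENNReal.ofReal c * volume {x : EuclideanSpace ℝ (Fin 2) | s < |u x|}
        ≤ ENNReal.ofReal K :=
      le_trans (mul_le_mul_right (measure_mono hsub) _) (le_trans cheb hlin.le)
    have hmle : volume {x : EuclideanSpace ℝ (Fin 2) | s < |u x|} ≤ ENNReal.ofReal t := by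
      have hdiv : volume {x : EuclideanSpace ℝ (Fin 2) | s < |u x|}
          ≤ ENNReal.ofReal K / ENNReal.ofReal c := by
        rw [ENNReal.le_div_iff_mul_le (Or.inl (ENNReal.ofReal_pos.2 hc0).ne')
          (Or.inl ENNReal.ofReal_ne_top), mul_comm]
        exact h2
      refine hdiv.trans ?_
      rw [← ENNReal.ofReal_div_of_pos hc0]
      exact ENNReal.ofReal_le_ofReal ((div_le_iff₀ hc0).2 (by linarith))
    have hd := decRearr_le hs0 hmle
    have hfin : lam * decRearr u t ^ 2 ≤ lam * s ^ 2 :=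
      mul_le_mul_of_nonneg_left (pow_le_pow_left₀ (decRearr_nonneg u t) hd 2) hlam.le
    rw [hls] at hfin
    exact hfin
  refine ⟨key, ?_⟩
  intro T hT t ht htT
  have h1 := key T hT t ht htT
  have hA : 0 ≤ Real.log (T / t) := Real.log_nonneg ((one_le_div ht).2 htT)
  set M := max 1 (Real.sqrt (K / (4 * π))) with hM
  have hM1 : 1 ≤ M := le_max_left _ _
  have hM0 : 0 ≤ M := le_trans zero_le_one hM1
  set D := 4 * π / T + Real.log (T / t) with hD
  have hD0 : 0 < D := by
    have hpi := Real.pi_pos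
    have : 0 < 4 * π / T := by positivity
    dsimp [D]; linarith
  have hKD : K / T + Real.log (T / t) ≤ M ^ 2 * D := by
    have hpi := Real.pi_pos
    have hKpi : K / (4 * π) ≤ M ^ 2 := by
      have hle : Real.sqrt (K / (4 * π)) ≤ M := le_max_right _ _
      calc K / (4 * π) = Real.sqrt (K / (4 * π)) ^ 2 := (Real.sq_sqrt (by positivity)).symm
        _ ≤ M ^ 2 := pow_le_pow_left₀ (Real.sqrt_nonneg _) hle 2
    have h2 : K / T ≤ M ^ 2 * (4 * π / T) := by
      have h3 : K / T = K / (4 * π) * (4 * π / T) := by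
        field_simp
      rw [h3]
      exact mul_le_mul_of_nonneg_right hKpi (by positivity)
    have h4 : Real.log (T / t) ≤ M ^ 2 * Real.log (T / t) :=
      le_mul_of_one_le_left hA (by nlinarith)
    dsimp [D]
    nlinarith [h2, h4]
  have hu2 : lam * decRearr u t ^ 2 ≤ M ^ 2 * D := le_trans h1 hKD
  have hub : decRearr u t ≤ M * Real.sqrt D / Real.sqrt lam := by
    have h5 : decRearr u t ^ 2 ≤ (M * Real.sqrt D / Real.sqrt lam) ^ 2 := by
      rw [div_pow, mul_pow, Real.sq_sqrt hD0.le, Real.sq_sqrt hlam.le, le_div_iff₀ hlam]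
      nlinarith [hu2]
    have h6 := Real.sqrt_le_sqrt h5
    rwa [Real.sqrt_sq (decRearr_nonneg u t), Real.sqrt_sq (by positivity)] at h6
  have hsD : 0 < Real.sqrt D := Real.sqrt_pos.2 hD0
  rw [div_le_iff₀ hsD]
  calc decRearr u t ≤ M * Real.sqrt D / Real.sqrt lam := hub
    _ = 1 / Real.sqrt lam * M * Real.sqrt D := by ring
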